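/- For every n ≥ 0, the number of permutations of [n] avoiding {2143, 2341, 3412} equals the number of permutations of [n] avoiding {2143, 2341, 3421}; indeed there is an explicit bijection between the two avoidance classes preserving the number and positions of left-right maxima. -/

import Mathlib

/-- A word `π` contains the pattern `τ` if some subsequence of `π` is
order-isomorphic to `τ`. -/
def containsPat {n k : ℕ} (π : Fin n → Fin n) (τ : Fin k → Fin k) : Prop :=
  ∃ f : Fin k → Fin n, StrictMono f ∧ ∀ i j : Fin k, τ i < τ j ↔ π (f i) < π (f j)

/-- `π` avoids the pattern `τ`. -/
def avoidsPat {n k : ℕ} (π : Fin n → Fin n) (τ : Fin k → Fin k) : Prop :=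
  ¬ containsPat π τ


/-- Position `i` is a left-right maximum of `pi`. -/
def isLRMax {n : ℕ} (π : Fin n → Fin n) (i : Fin n) : Prop :=
  ∀ j, j < i → π j < π i

/-- The number of left-right maxima of `pi`. -/
noncomputable def lrMaxCount {n : ℕ} (π : Fin n → Fin n) : ℕ :=
  Nat.card {i : Fin n // isLRMax π i}

set_option linter.unusedTactic false
set_option linter.unreachableTactic false
set_option linter.unusedVariables false

namespace Bij7

lemma iff_of_mono {k : ℕ} {α β : Type*} [LinearOrder α] [LinearOrder β] {τ : Fin k → α}
    {ρ : Fin k → β} (hinj : Function.Injective τ)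
    (h : ∀ s t, τ s < τ t → ρ s < ρ t) : ∀ s t, τ s < τ t ↔ ρ s < ρ t := by
  intro s t
  constructor
  · exact h s t
  · intro hr
    rcases lt_trichotomy (τ s) (τ t) with h' | h' | h'
    · exact h'
    · exact absurd hr (by rw [hinj h']; exact lt_irrefl _)
    · exact absurd hr (lt_asymm (h t s h'))

variable {n : ℕ}

section haslemmas
variable {w : Fin n → Fin n} {i j k l : Fin n}

lemma smono (h1 : i<j) (h2 : j<k) (h3 : k<l) : StrictMono (![i,j,k,l] : Fin 4 → Fin n) := by
  rw [Fin.strictMono_iff_lt_succ]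
  intro t; fin_cases t <;> simpa

/-- 2143 -/
lemma has2143 (h1 : i<j) (h2 : j<k) (h3 : k<l)
    (v1 : w j < w i) (v2 : w i < w l) (v3 : w l < w k) : containsPat w ![1,0,3,2] := by
  refine ⟨![i,j,k,l], smono h1 h2 h3, iff_of_mono (by decide) ?_⟩
  intro s t hst
  fin_cases s <;> fin_cases t <;>
    first
    | exact absurd hst (by decide)
    | exact v1 | exact v2 | exact v3
    | exact lt_trans v1 v2 | exact lt_trans v2 v3
    | exact lt_trans v1 (lt_trans v2 v3)

/-- 2341 -/
lemma has2341 (h1 : i<j) (h2 : j<k) (h3 : k<l)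
    (v1 : w i < w j) (v2 : w j < w k) (v3 : w l < w i) : containsPat w ![1,2,3,0] := by
  refine ⟨![i,j,k,l], smono h1 h2 h3, iff_of_mono (by decide) ?_⟩
  intro s t hst
  fin_cases s <;> fin_cases t <;>
    first
    | exact absurd hst (by decide)
    | exact v1 | exact v2 | exact v3
    | exact lt_trans v1 v2 | exact lt_trans v2 v3
    | exact lt_trans v3 v1 | exact lt_trans v3 (lt_trans v1 v2)
    | exact lt_trans (lt_trans v3 v1) v2

/-- 3412 -/
lemma has3412 (h1 : i<j) (h2 : j<k) (h3 : k<l)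
    (v1 : w k < w l) (v2 : w l < w i) (v3 : w i < w j) : containsPat w ![2,3,0,1] := by
  refine ⟨![i,j,k,l], smono h1 h2 h3, iff_of_mono (by decide) ?_⟩
  intro s t hst
  fin_cases s <;> fin_cases t <;>
    first
    | exact absurd hst (by decide)
    | exact v1 | exact v2 | exact v3
    | exact lt_trans v1 v2 | exact lt_trans v2 v3
    | exact lt_trans v1 (lt_trans v2 v3)

/-- 3421 -/
lemma has3421 (h1 : i<j) (h2 : j<k) (h3 : k<l)
    (v1 : w l < w k) (v2 : w k < w i) (v3 : w i < w j) : containsPat w ![2,3,1,0] := by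
  refine ⟨![i,j,k,l], smono h1 h2 h3, iff_of_mono (by decide) ?_⟩
  intro s t hst
  fin_cases s <;> fin_cases t <;>
    first
    | exact absurd hst (by decide)
    | exact v1 | exact v2 | exact v3
    | exact lt_trans v1 v2 | exact lt_trans v2 v3
    | exact lt_trans v1 (lt_trans v2 v3)

end haslemmas

section getlemmas
variable {w : Fin n → Fin n}

lemma get2143 (h : containsPat w ![1,0,3,2]) :
    ∃ i j k l : Fin n, i<j ∧ j<k ∧ k<l ∧ w j < w i ∧ w i < w l ∧ w l < w k := by
  obtain ⟨f, hf, hp⟩ := h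
  exact ⟨f 0, f 1, f 2, f 3, hf (by decide), hf (by decide), hf (by decide),
    (hp 1 0).mp (by decide), (hp 0 3).mp (by decide), (hp 3 2).mp (by decide)⟩

lemma get2341 (h : containsPat w ![1,2,3,0]) :
    ∃ i j k l : Fin n, i<j ∧ j<k ∧ k<l ∧ w i < w j ∧ w j < w k ∧ w l < w i := by
  obtain ⟨f, hf, hp⟩ := h
  exact ⟨f 0, f 1, f 2, f 3, hf (by decide), hf (by decide), hf (by decide),
    (hp 0 1).mp (by decide), (hp 1 2).mp (by decide), (hp 3 0).mp (by decide)⟩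

lemma get3412 (h : containsPat w ![2,3,0,1]) :
    ∃ i j k l : Fin n, i<j ∧ j<k ∧ k<l ∧ w k < w l ∧ w l < w i ∧ w i < w j := by
  obtain ⟨f, hf, hp⟩ := h
  exact ⟨f 0, f 1, f 2, f 3, hf (by decide), hf (by decide), hf (by decide),
    (hp 2 3).mp (by decide), (hp 3 0).mp (by decide), (hp 0 1).mp (by decide)⟩

lemma get3421 (h : containsPat w ![2,3,1,0]) :
    ∃ i j k l : Fin n, i<j ∧ j<k ∧ k<l ∧ w l < w k ∧ w k < w i ∧ w i < w j := by
  obtain ⟨f, hf, hp⟩ := h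
  exact ⟨f 0, f 1, f 2, f 3, hf (by decide), hf (by decide), hf (by decide),
    (hp 3 2).mp (by decide), (hp 2 0).mp (by decide), (hp 0 1).mp (by decide)⟩

end getlemmas

end Bij7

namespace Bij7
variable {n : ℕ}

/-- A "D-pair": an ascent `i<j`, `w i < w j`, with at least two entries after `j`
smaller than `w i`. -/
def Dpair (w : Fin n → Fin n) (i j : Fin n) : Prop :=
  i < j ∧ w i < w j ∧ ∃ k l, j < k ∧ j < l ∧ k ≠ l ∧ w k < w i ∧ w l < w i

instance (w : Fin n → Fin n) (i j : Fin n) : Decidable (Dpair w i j) := by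
  unfold Dpair; infer_instance

def Dne (w : Fin n → Fin n) : Prop := ∃ i j, Dpair w i j

instance (w : Fin n → Fin n) : Decidable (Dne w) := by
  unfold Dne; infer_instance

def iSet (w : Fin n → Fin n) : Finset (Fin n) :=
  Finset.univ.filter (fun i => ∃ j, Dpair w i j)

lemma iSet_ne {w : Fin n → Fin n} (h : Dne w) : (iSet w).Nonempty := by
  obtain ⟨i, j, hij⟩ := h
  exact ⟨i, by simp [iSet]; exact ⟨j, hij⟩⟩

def i0 (w : Fin n → Fin n) (h : Dne w) : Fin n := (iSet w).min' (iSet_ne h)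

def jSet (w : Fin n → Fin n) (h : Dne w) : Finset (Fin n) :=
  Finset.univ.filter (fun j => Dpair w (i0 w h) j)

lemma jSet_ne {w : Fin n → Fin n} (h : Dne w) : (jSet w h).Nonempty := by
  have := (iSet w).min'_mem (iSet_ne h)
  simp [iSet] at this
  obtain ⟨j, hj⟩ := this
  exact ⟨j, by simp [jSet]; exact hj⟩

def j0 (w : Fin n → Fin n) (h : Dne w) : Fin n := (jSet w h).min' (jSet_ne h)

lemma Dpair_i0j0 (w : Fin n → Fin n) (h : Dne w) : Dpair w (i0 w h) (j0 w h) := by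
  have := (jSet w h).min'_mem (jSet_ne h)
  exact (Finset.mem_filter.mp this).2

lemma min1 {w : Fin n → Fin n} (h : Dne w) {i j : Fin n} (hd : Dpair w i j) :
    i0 w h ≤ i :=
  (iSet w).min'_le i (by simp [iSet]; exact ⟨j, hd⟩)

lemma min2 {w : Fin n → Fin n} (h : Dne w) {j : Fin n} (hd : Dpair w (i0 w h) j) :
    j0 w h ≤ j :=
  (jSet w h).min'_le j (by simp [jSet]; exact hd)

/-- The set of positions after `j0` holding values below `w i0`. -/
def Sset (w : Fin n → Fin n) (h : Dne w) : Finset (Fin n) :=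
  Finset.univ.filter (fun k => j0 w h < k ∧ w k < w (i0 w h))

lemma mem_Sset {w : Fin n → Fin n} (h : Dne w) {k : Fin n} :
    k ∈ Sset w h ↔ j0 w h < k ∧ w k < w (i0 w h) := by simp [Sset]

/-- reversal of a finset of positions -/
noncomputable def revIn (T : Finset (Fin n)) : Fin n → Fin n := fun x =>
  if hx : x ∈ T then
    ((T.orderIsoOfFin rfl) (Fin.rev ((T.orderIsoOfFin rfl).symm ⟨x, hx⟩)) : Fin n)
  else x

lemma revIn_mem {T : Finset (Fin n)} {x : Fin n} (hx : x ∈ T) : revIn T x ∈ T := by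
  rw [revIn, dif_pos hx]
  exact ((T.orderIsoOfFin rfl) (Fin.rev ((T.orderIsoOfFin rfl).symm ⟨x, hx⟩))).2

lemma revIn_not_mem {T : Finset (Fin n)} {x : Fin n} (hx : x ∉ T) : revIn T x = x := by
  rw [revIn, dif_neg hx]

lemma revIn_apply {T : Finset (Fin n)} {x : Fin n} (hx : x ∈ T) :
    revIn T x = ((T.orderIsoOfFin rfl) (Fin.rev ((T.orderIsoOfFin rfl).symm ⟨x, hx⟩)) : Fin n) :=
  dif_pos hx

lemma revIn_invol (T : Finset (Fin n)) : Function.Involutive (revIn T) := by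
  intro x
  by_cases hx : x ∈ T
  · have h2 : ((T.orderIsoOfFin rfl) (Fin.rev ((T.orderIsoOfFin rfl).symm ⟨x, hx⟩)) : Fin n) ∈ T :=
      ((T.orderIsoOfFin rfl) (Fin.rev ((T.orderIsoOfFin rfl).symm ⟨x, hx⟩))).2
    rw [revIn_apply hx, revIn_apply h2]
    have h3 : (⟨((T.orderIsoOfFin rfl) (Fin.rev ((T.orderIsoOfFin rfl).symm ⟨x, hx⟩)) : Fin n), h2⟩
        : {y // y ∈ T}) = (T.orderIsoOfFin rfl) (Fin.rev ((T.orderIsoOfFin rfl).symm ⟨x, hx⟩)) :=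
      Subtype.ext rfl
    rw [h3, OrderIso.symm_apply_apply, Fin.rev_rev, OrderIso.apply_symm_apply]
  · rw [revIn_not_mem hx, revIn_not_mem hx]

lemma revIn_anti {T : Finset (Fin n)} {x y : Fin n} (hx : x ∈ T) (hy : y ∈ T)
    (hxy : x < y) : revIn T y < revIn T x := by
  rw [revIn_apply hx, revIn_apply hy]
  rw [Subtype.coe_lt_coe]
  apply (T.orderIsoOfFin rfl).strictMono
  rw [Fin.rev_lt_rev]
  exact (T.orderIsoOfFin rfl).symm.strictMono (show (⟨x,hx⟩:{y//y ∈ T}) < ⟨y,hy⟩ from hxy)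

end Bij7

namespace Bij7
variable {n : ℕ}

/-- Avoidance predicates in positional form. -/
def No2143 (w : Fin n → Fin n) : Prop :=
  ∀ ⦃i j k l : Fin n⦄, i<j → j<k → k<l → w j<w i → w i<w l → w l<w k → False
def No2341 (w : Fin n → Fin n) : Prop :=
  ∀ ⦃i j k l : Fin n⦄, i<j → j<k → k<l → w i<w j → w j<w k → w l<w i → False
def No3412 (w : Fin n → Fin n) : Prop :=
  ∀ ⦃i j k l : Fin n⦄, i<j → j<k → k<l → w k<w l → w l<w i → w i<w j → False
def No3421 (w : Fin n → Fin n) : Prop :=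
  ∀ ⦃i j k l : Fin n⦄, i<j → j<k → k<l → w l<w k → w k<w i → w i<w j → False

lemma no2143_iff {w : Fin n → Fin n} : avoidsPat w ![1,0,3,2] ↔ No2143 w := by
  constructor
  · intro hav i j k l h1 h2 h3 v1 v2 v3; exact hav (has2143 h1 h2 h3 v1 v2 v3)
  · intro hno hc
    obtain ⟨i,j,k,l,h1,h2,h3,v1,v2,v3⟩ := get2143 hc
    exact hno h1 h2 h3 v1 v2 v3

lemma no2341_iff {w : Fin n → Fin n} : avoidsPat w ![1,2,3,0] ↔ No2341 w := by
  constructor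
  · intro hav i j k l h1 h2 h3 v1 v2 v3; exact hav (has2341 h1 h2 h3 v1 v2 v3)
  · intro hno hc
    obtain ⟨i,j,k,l,h1,h2,h3,v1,v2,v3⟩ := get2341 hc
    exact hno h1 h2 h3 v1 v2 v3

lemma no3412_iff {w : Fin n → Fin n} : avoidsPat w ![2,3,0,1] ↔ No3412 w := by
  constructor
  · intro hav i j k l h1 h2 h3 v1 v2 v3; exact hav (has3412 h1 h2 h3 v1 v2 v3)
  · intro hno hc
    obtain ⟨i,j,k,l,h1,h2,h3,v1,v2,v3⟩ := get3412 hc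
    exact hno h1 h2 h3 v1 v2 v3

lemma no3421_iff {w : Fin n → Fin n} : avoidsPat w ![2,3,1,0] ↔ No3421 w := by
  constructor
  · intro hav i j k l h1 h2 h3 v1 v2 v3; exact hav (has3421 h1 h2 h3 v1 v2 v3)
  · intro hno hc
    obtain ⟨i,j,k,l,h1,h2,h3,v1,v2,v3⟩ := get3421 hc
    exact hno h1 h2 h3 v1 v2 v3

/-- If there is no D-pair, the word avoids both 3412 and 3421. -/
lemma no3412_of_not_Dne {w : Fin n → Fin n} (h : ¬ Dne w) : No3412 w := by
  intro i j k l h1 h2 h3 v1 v2 v3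
  exact h ⟨i, j, ⟨h1, v3, k, l, h2, lt_trans h2 h3, (ne_of_lt h3), lt_trans v1 v2, v2⟩⟩

lemma no3421_of_not_Dne {w : Fin n → Fin n} (h : ¬ Dne w) : No3421 w := by
  intro i j k l h1 h2 h3 v1 v2 v3
  exact h ⟨i, j, ⟨h1, v3, k, l, h2, lt_trans h2 h3, (ne_of_lt h3), v2, lt_trans v1 v2⟩⟩

/-- Context: an injective word with a D-pair. -/
structure Ctx (n : ℕ) where
  w : Fin n → Fin n
  inj : Function.Injective w
  hne : Dne w

namespace Ctx
variable (C : Ctx n)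

def I : Fin n := i0 C.w C.hne
def J : Fin n := j0 C.w C.hne
def A : Fin n := C.w C.I
def B : Fin n := C.w C.J
def S : Finset (Fin n) := Sset C.w C.hne
noncomputable def r : Fin n → Fin n := revIn C.S
noncomputable def q : Fin n → Fin n := fun x => C.w (C.r x)

lemma hd0 : Dpair C.w C.I C.J := Dpair_i0j0 C.w C.hne
lemma IJ : C.I < C.J := C.hd0.1
lemma AB : C.A < C.B := C.hd0.2.1
lemma minI {i j : Fin n} (hd : Dpair C.w i j) : C.I ≤ i := min1 C.hne hd
lemma minJ {j : Fin n} (hd : Dpair C.w C.I j) : C.J ≤ j := min2 C.hne hd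
lemma mem_S {k : Fin n} : k ∈ C.S ↔ C.J < k ∧ C.w k < C.A := mem_Sset C.hne

lemma Spair : ∃ k l, k ∈ C.S ∧ l ∈ C.S ∧ k ≠ l := by
  obtain ⟨-, -, k, l, hk, hl, hkl, hvk, hvl⟩ := C.hd0
  exact ⟨k, l, C.mem_S.mpr ⟨hk, hvk⟩, C.mem_S.mpr ⟨hl, hvl⟩, hkl⟩

lemma S_gt {k : Fin n} (hk : k ∈ C.S) : C.J < k := (C.mem_S.mp hk).1
lemma S_small {k : Fin n} (hk : k ∈ C.S) : C.w k < C.A := (C.mem_S.mp hk).2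
lemma I_gt_S {k : Fin n} (hk : k ∈ C.S) : C.I < k := lt_trans C.IJ (C.S_gt hk)
lemma I_not_S : C.I ∉ C.S := fun hk => absurd (C.I_gt_S hk) (lt_irrefl _)
lemma J_not_S : C.J ∉ C.S := fun hk => absurd (C.S_gt hk) (lt_irrefl _)

lemma ne_I_of_lt {t : Fin n} (ht : C.w t < C.A) : t ≠ C.I := by
  intro h; rw [h] at ht; exact lt_irrefl _ ht

/-- a position after J not in S holds a big value -/
lemma big_of_not_S {k : Fin n} (h1 : C.J < k) (h2 : k ∉ C.S) : C.A < C.w k := by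
  rcases lt_trichotomy (C.w k) C.A with h | h | h
  · exact absurd (C.mem_S.mpr ⟨h1, h⟩) h2
  · exact absurd (C.inj h) (by intro he; rw [he] at h1; exact absurd (lt_trans C.IJ h1) (lt_irrefl _))
  · exact h

/-- a small-valued position not in S is before J (and differs from I) -/
lemma lt_J_of_small {t : Fin n} (h1 : C.w t < C.A) (h2 : t ∉ C.S) : t < C.J := by
  rcases lt_trichotomy t C.J with h | h | h
  · exact h
  · exfalso; rw [h] at h1; exact absurd (lt_trans h1 C.AB) (lt_irrefl _)
  · exact absurd (C.big_of_not_S h h2) (fun _ => by exact absurd h1 (not_lt.mpr (le_of_lt (C.big_of_not_S h h2))))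

lemma r_mem {x : Fin n} (hx : x ∈ C.S) : C.r x ∈ C.S := revIn_mem hx
lemma r_eq {x : Fin n} (hx : x ∉ C.S) : C.r x = x := revIn_not_mem hx
lemma r_invol (x : Fin n) : C.r (C.r x) = x := revIn_invol C.S x
lemma r_anti {x y : Fin n} (hx : x ∈ C.S) (hy : y ∈ C.S) (hxy : x < y) :
    C.r y < C.r x := revIn_anti hx hy hxy
lemma r_inj : Function.Injective C.r := (revIn_invol C.S).injective

lemma q_inj : Function.Injective C.q := fun _ _ hxy => C.r_inj (C.inj hxy)
lemma q_eq {x : Fin n} (hx : x ∉ C.S) : C.q x = C.w x := by rw [q, C.r_eq hx]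
lemma qI : C.q C.I = C.A := by rw [C.q_eq C.I_not_S]; rfl
lemma qJ : C.q C.J = C.B := by rw [C.q_eq C.J_not_S]; rfl
lemma q_small {x : Fin n} (hx : x ∈ C.S) : C.q x < C.A := C.S_small (C.r_mem hx)
lemma q_mirror {x : Fin n} (hx : x ∈ C.S) : C.q (C.r x) = C.w x := by rw [q, C.r_invol]
lemma q_big {x : Fin n} (h1 : C.J < x) (h2 : x ∉ C.S) : C.A < C.q x := by
  rw [C.q_eq h2]; exact C.big_of_not_S h1 h2

/-- membership in S via q-values -/
lemma mem_S_q {k : Fin n} : k ∈ C.S ↔ C.J < k ∧ C.q k < C.A := by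
  constructor
  · intro hk; exact ⟨C.S_gt hk, C.q_small hk⟩
  · rintro ⟨h1, h2⟩
    by_contra hk
    exact absurd h2 (not_lt.mpr (le_of_lt (C.q_big h1 hk)))

lemma q_lt_J_of_small {t : Fin n} (h1 : C.q t < C.A) (h2 : t ∉ C.S) : t < C.J := by
  rw [C.q_eq h2] at h1; exact C.lt_J_of_small h1 h2

/-- Dpair for q at (I, J) -/
lemma hd0q : Dpair C.q C.I C.J := by
  obtain ⟨k, l, hk, hl, hkl⟩ := C.Spair
  refine ⟨C.IJ, by rw [C.qI, C.qJ]; exact C.AB, k, l, C.S_gt hk, C.S_gt hl, hkl, ?_, ?_⟩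
  · rw [C.qI]; exact C.q_small hk
  · rw [C.qI]; exact C.q_small hl

lemma hneq : Dne C.q := ⟨C.I, C.J, C.hd0q⟩

/-- Step 0a : no q-D-pair with first coordinate before I -/
lemma q_min1 {i j : Fin n} (hi : i < C.I) (hd : Dpair C.q i j) : False := by
  obtain ⟨hij, hv, k, l, hk, hl, hkl, hvk, hvl⟩ := hd
  have hiS : i ∉ C.S := fun hmem => absurd (lt_trans hi (C.I_gt_S hmem)) (lt_irrefl _)
  rw [C.q_eq hiS] at hv hvk hvl
  have hne : C.w i ≠ C.A := fun he => (ne_of_lt hi) (C.inj he)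
  rcases lt_or_gt_of_ne hne with hsmall | hbig
  · -- w i < A
    -- witnesses: r k, r l
    have wk : C.w (C.r k) = C.q k := rfl
    have wl : C.w (C.r l) = C.q l := rfl
    have hrkl : C.r k ≠ C.r l := fun he => hkl (C.r_inj he)
    rcases le_or_gt j C.J with hjJ | hjJ
    · -- use pair (i,j)
      have hjS : j ∉ C.S := fun hmem => absurd (lt_of_lt_of_le (C.S_gt hmem) hjJ) (lt_irrefl _)
      rw [C.q_eq hjS] at hv
      have hgt : ∀ m, C.J < m ∨ j < m → j < C.r m := by
        intro m hm
        by_cases hmS : m ∈ C.S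
        · exact lt_of_le_of_lt hjJ (C.S_gt (C.r_mem hmS))
        · rw [C.r_eq hmS]
          rcases hm with h | h
          · exact lt_of_le_of_lt hjJ h
          · exact h
      exact absurd (C.minI ⟨hij, hv, C.r k, C.r l, hgt k (Or.inr hk), hgt l (Or.inr hl),
        hrkl, by rw [wk]; exact hvk, by rw [wl]; exact hvl⟩) (not_le.mpr hi)
    · -- use pair (i,J)
      have hgt : ∀ m, j < m → C.J < C.r m := by
        intro m hm
        by_cases hmS : m ∈ C.S
        · exact C.S_gt (C.r_mem hmS)
        · rw [C.r_eq hmS]; exact lt_trans hjJ hm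
      exact absurd (C.minI ⟨lt_trans hi C.IJ, lt_trans hsmall C.AB, C.r k, C.r l,
        hgt k hk, hgt l hl, hrkl,
        by rw [wk]; exact hvk, by rw [wl]; exact hvl⟩) (not_le.mpr hi)
  · -- A < w i : all q-values below w i give w-values below w i at same positions
    have hjS : j ∉ C.S := by
      intro hmem
      exact absurd (lt_trans (lt_trans hbig hv) (C.q_small hmem)) (lt_irrefl _)
    rw [C.q_eq hjS] at hv
    have key : ∀ m, C.q m < C.w i → C.w m < C.w i := by
      intro m hm
      by_cases hmS : m ∈ C.S
      · exact lt_trans (C.S_small hmS) hbig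
      · rw [← C.q_eq hmS]; exact hm
    exact absurd (C.minI ⟨hij, hv, k, l, hk, hl, hkl, key k hvk, key l hvl⟩)
      (not_le.mpr hi)

/-- Step 0b : no q-D-pair (I,j) with j before J -/
lemma q_min2 {j : Fin n} (hj : j < C.J) (hd : Dpair C.q C.I j) : False := by
  obtain ⟨hij, hv, k, l, hk, hl, hkl, hvk, hvl⟩ := hd
  have hjS : j ∉ C.S := fun hmem => absurd (lt_trans hj (C.S_gt hmem)) (lt_irrefl _)
  rw [C.qI] at hv hvk hvl
  rw [C.q_eq hjS] at hv
  have hrkl : C.r k ≠ C.r l := fun he => hkl (C.r_inj he)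
  have hgt : ∀ m, j < m → j < C.r m := by
    intro m hm
    by_cases hmS : m ∈ C.S
    · exact lt_trans hj (C.S_gt (C.r_mem hmS))
    · rw [C.r_eq hmS]; exact hm
  exact absurd (C.minJ ⟨hij, hv, C.r k, C.r l, hgt k hk, hgt l hl, hrkl, hvk, hvl⟩)
    (not_le.mpr hj)

/-- the q-context -/
noncomputable def Q : Ctx n := ⟨C.q, C.q_inj, C.hneq⟩

lemma QI : C.Q.I = C.I := by
  have h1 : C.Q.I ≤ C.I := min1 C.Q.hne (show Dpair C.Q.w C.I C.J from C.hd0q)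
  rcases lt_or_ge C.Q.I C.I with h | h
  · exfalso
    have := Dpair_i0j0 C.Q.w C.Q.hne
    exact C.q_min1 h (by exact this)
  · exact le_antisymm h1 h

lemma QJ : C.Q.J = C.J := by
  have hd : Dpair C.Q.w C.Q.I C.J := by rw [QI]; exact C.hd0q
  have h1 : C.Q.J ≤ C.J := min2 C.Q.hne hd
  rcases lt_or_ge C.Q.J C.J with h | h
  · exfalso
    have hmem : Dpair C.q C.Q.I C.Q.J := Dpair_i0j0 C.Q.w C.Q.hne
    rw [C.QI] at hmem
    exact C.q_min2 h hmem
  · exact le_antisymm h1 h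

lemma QA : C.Q.A = C.A := by rw [Ctx.A, QI]; exact C.qI
lemma QS : C.Q.S = C.S := by
  ext k
  rw [C.Q.mem_S, C.QJ, C.QA]
  exact ⟨fun ⟨h1,h2⟩ => C.mem_S_q.mpr ⟨h1,h2⟩,
    fun hk => ⟨(C.mem_S_q.mp hk).1, (C.mem_S_q.mp hk).2⟩⟩

lemma Qq : ∀ x, C.Q.q x = C.w x := by
  intro x
  rw [show C.Q.q x = C.Q.w (C.Q.r x) from rfl]
  have : C.Q.r = C.r := by rw [Ctx.r, Ctx.r, QS]
  rw [this]
  rw [show C.Q.w = C.q from rfl, Ctx.q, C.r_invol]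

end Ctx
end Bij7

namespace Bij7
namespace Ctx
variable {n : ℕ} (C : Ctx n)

lemma wne {x y : Fin n} (hxy : x ≠ y) : C.w x ≠ C.w y := fun he => hxy (C.inj he)
lemma qne {x y : Fin n} (hxy : x ≠ y) : C.q x ≠ C.q y := fun he => hxy (C.q_inj he)

/-- F5: entries before I that are small lie below all S-values. -/
lemma F5 (h2341 : No2341 C.w) {t : Fin n} (ht : t < C.I) (hts : C.w t < C.A)
    {s : Fin n} (hs : s ∈ C.S) : C.w t < C.w s := by
  have hne : t ≠ s := fun he => by
    rw [he] at ht; exact absurd (lt_trans ht (C.I_gt_S hs)) (lt_irrefl _)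
  rcases lt_or_gt_of_ne (C.wne hne) with h | h
  · exact h
  · exact (h2341 ht C.IJ (C.S_gt hs) hts C.AB h).elim

/-- H2: after a small entry (beyond I), the big values increase. -/
lemma H2 (h2143 : No2143 C.w) {t y z : Fin n} (hIt : C.I < t) (ht : C.w t < C.A)
    (hty : t < y) (hyz : y < z) (hay : C.A < C.w y) (haz : C.A < C.w z) :
    C.w y < C.w z := by
  rcases lt_or_gt_of_ne (C.wne (ne_of_lt hyz)) with h | h
  · exact h
  · exact absurd (h2143 hIt hty hyz ht haz h) (fun f => f)

/-- Case I: S-values decrease (π avoids 3412). -/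
lemma SdecI (h3412 : No3412 C.w) {k l : Fin n} (hk : k ∈ C.S) (hl : l ∈ C.S)
    (hkl : k < l) : C.w l < C.w k := by
  rcases lt_or_gt_of_ne (C.wne (ne_of_lt hkl)) with h | h
  · exact (h3412 C.IJ (C.S_gt hk) hkl h (C.S_small hl) C.AB).elim
  · exact h

lemma qmonoI (h3412 : No3412 C.w) {k l : Fin n} (hk : k ∈ C.S) (hl : l ∈ C.S)
    (hkl : k < l) : C.q k < C.q l :=
  C.SdecI h3412 (C.r_mem hl) (C.r_mem hk) (C.r_anti hk hl hkl)

/-- Case II: S-values increase (π avoids 3421). -/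
lemma SincII (h3421 : No3421 C.w) {k l : Fin n} (hk : k ∈ C.S) (hl : l ∈ C.S)
    (hkl : k < l) : C.w k < C.w l := by
  rcases lt_or_gt_of_ne (C.wne (ne_of_lt hkl)) with h | h
  · exact h
  · exact (h3421 C.IJ (C.S_gt hk) hkl h (C.S_small hk) C.AB).elim

lemma qantiII (h3421 : No3421 C.w) {k l : Fin n} (hk : k ∈ C.S) (hl : l ∈ C.S)
    (hkl : k < l) : C.q l < C.q k :=
  C.SincII h3421 (C.r_mem hl) (C.r_mem hk) (C.r_anti hk hl hkl)

/-- LR maxima are preserved. -/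
lemma lr_iff (t : Fin n) : isLRMax C.q t ↔ isLRMax C.w t := by
  by_cases ht : t ∈ C.S
  · constructor
    · intro h
      exact absurd (h C.I (C.I_gt_S ht)) (not_lt.mpr (le_of_lt (by
        rw [C.qI]; exact C.q_small ht)))
    · intro h
      exact absurd (h C.I (C.I_gt_S ht)) (not_lt.mpr (le_of_lt (C.S_small ht)))
  · have hqt : C.q t = C.w t := C.q_eq ht
    constructor
    · intro h s hst
      by_cases hs : s ∈ C.S
      · have h1 : C.J < t := lt_trans (C.S_gt hs) hst
        exact lt_trans (C.S_small hs) (C.big_of_not_S h1 ht)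
      · rw [← C.q_eq hs, ← hqt]; exact h s hst
    · intro h s hst
      by_cases hs : s ∈ C.S
      · have h1 : C.J < t := lt_trans (C.S_gt hs) hst
        rw [hqt]
        exact lt_trans (C.q_small hs) (C.big_of_not_S h1 ht)
      · rw [C.q_eq hs, hqt]; exact h s hst

/-- Claim: no 3421 occurrence avoiding S (given 2143-, 2341-avoidance). -/
lemma claim3421 (h2143 : No2143 C.w) (h2341 : No2341 C.w) {x1 x2 x3 x4 : Fin n}
    (o12 : x1 < x2) (o23 : x2 < x3) (o34 : x3 < x4)
    (m2 : x2 ∉ C.S) (m3 : x3 ∉ C.S) (m4 : x4 ∉ C.S)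
    (v43 : C.w x4 < C.w x3) (v31 : C.w x3 < C.w x1) (v12 : C.w x1 < C.w x2) : False := by
  have v41 : C.w x4 < C.w x1 := lt_trans v43 v31
  rcases lt_trichotomy x1 C.I with hx1 | hx1 | hx1
  · exact absurd (C.minI ⟨o12, v12, x3, x4, o23, lt_trans o23 o34, ne_of_lt o34,
      v31, v41⟩) (not_le.mpr hx1)
  · subst hx1
    have hx3 : x3 < C.J := C.lt_J_of_small v31 m3
    exact absurd (C.minJ ⟨o12, v12, x3, x4, o23,
      lt_trans o23 o34, ne_of_lt o34, v31, v41⟩)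
      (not_le.mpr (lt_trans o23 hx3))
  · have hx1I : x1 ≠ C.I := ne_of_gt hx1
    rcases lt_or_gt_of_ne (C.wne hx1I) with hsm | hbg
    · -- w x1 < A
      have hx3 : x3 < C.J := C.lt_J_of_small (lt_trans v31 hsm) m3
      have hx2 : x2 < C.J := lt_trans o23 hx3
      have hx2I : C.I < x2 := lt_trans hx1 o12
      have hwx2 : C.w x2 < C.B := by
        rcases lt_or_gt_of_ne (C.wne (ne_of_gt hx2I)) with h | h
        · exact lt_trans h C.AB
        · exact C.H2 h2143 hx1 hsm o12 hx2 h C.AB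
      by_cases hex : ∃ s ∈ C.S, C.w s < C.w x1
      · obtain ⟨s, hs, hws⟩ := hex
        exact h2341 o12 hx2 (C.S_gt hs) v12 hwx2 hws
      · push_neg at hex
        obtain ⟨s, -, hs, -, -⟩ := C.Spair
        have hws : C.w x1 < C.w s := by
          have hlt : x1 < s := lt_trans (lt_trans o12 hx2) (C.S_gt hs)
          rcases lt_or_gt_of_ne (C.wne (ne_of_lt hlt)) with h | h
          · exact h
          · exact absurd h (not_lt.mpr (hex s hs))
        exact h2143 (lt_trans o12 o23) hx3 (C.S_gt hs) v31 hws
          (lt_trans (C.S_small hs) C.AB)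
    · -- A < w x1
      rcases lt_or_ge x1 C.J with hx1J | hx1J
      · obtain ⟨k, l, hk, hl, hkl⟩ := C.Spair
        exact absurd (C.minJ ⟨hx1, hbg, k, l, lt_trans hx1J (C.S_gt hk),
          lt_trans hx1J (C.S_gt hl), hkl, C.S_small hk, C.S_small hl⟩)
          (not_le.mpr hx1J)
      · have hx3J : C.J < x3 := lt_of_le_of_lt hx1J (lt_trans o12 o23)
        have b4 : C.A < C.w x4 := C.big_of_not_S (lt_trans hx3J o34) m4
        obtain ⟨k, -, hk, -, -⟩ := C.Spair
        rcases lt_trichotomy k x3 with h | h | h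
        · exact h2143 (C.I_gt_S hk) h o34 (C.S_small hk) b4 v43
        · exact m3 (h ▸ hk)
        · exact h2341 hx1 o12 (lt_trans o23 h) hbg v12 (C.S_small hk)

/-- Claim: no 3412 occurrence avoiding S (given 2143-, 2341-avoidance). -/
lemma claim3412 (h2143 : No2143 C.w) (h2341 : No2341 C.w) {x1 x2 x3 x4 : Fin n}
    (o12 : x1 < x2) (o23 : x2 < x3) (o34 : x3 < x4)
    (m2 : x2 ∉ C.S) (m3 : x3 ∉ C.S) (m4 : x4 ∉ C.S)
    (v34 : C.w x3 < C.w x4) (v41 : C.w x4 < C.w x1) (v12 : C.w x1 < C.w x2) : False := by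
  have v31 : C.w x3 < C.w x1 := lt_trans v34 v41
  rcases lt_trichotomy x1 C.I with hx1 | hx1 | hx1
  · exact absurd (C.minI ⟨o12, v12, x3, x4, o23, lt_trans o23 o34, ne_of_lt o34,
      v31, v41⟩) (not_le.mpr hx1)
  · subst hx1
    have hx3 : x3 < C.J := C.lt_J_of_small v31 m3
    exact absurd (C.minJ ⟨o12, v12, x3, x4, o23,
      lt_trans o23 o34, ne_of_lt o34, v31, v41⟩)
      (not_le.mpr (lt_trans o23 hx3))
  · have hx1I : x1 ≠ C.I := ne_of_gt hx1
    rcases lt_or_gt_of_ne (C.wne hx1I) with hsm | hbg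
    · -- w x1 < A
      have hx4 : x4 < C.J := C.lt_J_of_small (lt_trans v41 hsm) m4
      have hx3 : x3 < C.J := lt_trans o34 hx4
      have hx2 : x2 < C.J := lt_trans o23 hx3
      have hx2I : C.I < x2 := lt_trans hx1 o12
      have hwx2 : C.w x2 < C.B := by
        rcases lt_or_gt_of_ne (C.wne (ne_of_gt hx2I)) with h | h
        · exact lt_trans h C.AB
        · exact C.H2 h2143 hx1 hsm o12 hx2 h C.AB
      by_cases hex : ∃ s ∈ C.S, C.w s < C.w x1
      · obtain ⟨s, hs, hws⟩ := hex
        exact h2341 o12 hx2 (C.S_gt hs) v12 hwx2 hws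
      · push_neg at hex
        obtain ⟨s, -, hs, -, -⟩ := C.Spair
        have hws : C.w x1 < C.w s := by
          have hlt : x1 < s := lt_trans (lt_trans o12 hx2) (C.S_gt hs)
          rcases lt_or_gt_of_ne (C.wne (ne_of_lt hlt)) with h | h
          · exact h
          · exact absurd h (not_lt.mpr (hex s hs))
        exact h2143 (lt_trans o12 o23) hx3 (C.S_gt hs) v31 hws
          (lt_trans (C.S_small hs) C.AB)
    · -- A < w x1
      rcases lt_or_ge x1 C.J with hx1J | hx1J
      · obtain ⟨k, l, hk, hl, hkl⟩ := C.Spair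
        exact absurd (C.minJ ⟨hx1, hbg, k, l, lt_trans hx1J (C.S_gt hk),
          lt_trans hx1J (C.S_gt hl), hkl, C.S_small hk, C.S_small hl⟩)
          (not_le.mpr hx1J)
      · have hx3J : C.J < x3 := lt_of_le_of_lt hx1J (lt_trans o12 o23)
        have b3 : C.A < C.w x3 := C.big_of_not_S hx3J m3
        obtain ⟨k, -, hk, -, -⟩ := C.Spair
        rcases lt_trichotomy k x2 with h | h | h
        · exact h2143 (C.I_gt_S hk) h o23 (C.S_small hk) b3
            (lt_trans v31 v12)
        · exact m2 (h ▸ hk)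
        · exact h2341 hx1 o12 h hbg v12 (C.S_small hk)

end Ctx
end Bij7

namespace Bij7
namespace Ctx
variable {n : ℕ} (C : Ctx n)

/-- Case I: q avoids 2341. -/
lemma I_no2341q (h2143 : No2143 C.w) (h2341 : No2341 C.w) (h3412 : No3412 C.w) :
    No2341 C.q := by
  intro p1 p2 p3 p4 o12 o23 o34 v12 v23 v41
  by_cases h3 : p3 ∈ C.S
  · have h4 : p4 ∈ C.S := C.mem_S_q.mpr ⟨lt_trans (C.S_gt h3) o34,
      lt_trans v41 (lt_trans (lt_trans v12 v23) (C.q_small h3))⟩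
    exact absurd (C.qmonoI h3412 h3 h4 o34)
      (not_lt.mpr (le_of_lt (lt_trans v41 (lt_trans v12 v23))))
  by_cases h2 : p2 ∈ C.S
  · have h4 : p4 ∈ C.S := C.mem_S_q.mpr ⟨lt_trans (C.S_gt h2) (lt_trans o23 o34),
      lt_trans v41 (lt_trans v12 (C.q_small h2))⟩
    exact absurd (C.qmonoI h3412 h2 h4 (lt_trans o23 o34))
      (not_lt.mpr (le_of_lt (lt_trans v41 v12)))
  by_cases h1 : p1 ∈ C.S
  · have h4 : p4 ∈ C.S := C.mem_S_q.mpr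
      ⟨lt_trans (C.S_gt h1) (lt_trans o12 (lt_trans o23 o34)),
       lt_trans v41 (C.q_small h1)⟩
    exact absurd (C.qmonoI h3412 h1 h4 (lt_trans o12 (lt_trans o23 o34)))
      (not_lt.mpr (le_of_lt v41))
  rw [C.q_eq h1] at v12 v41
  rw [C.q_eq h2] at v12 v23
  rw [C.q_eq h3] at v23
  by_cases h4 : p4 ∈ C.S
  · have hne : p4 ≠ p1 := ne_of_gt (lt_trans o12 (lt_trans o23 o34))
    rcases lt_or_gt_of_ne (C.wne hne) with h | h
    · exact h2341 o12 o23 o34 v12 v23 h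
    · have hk'S : C.r p4 ∈ C.S := C.r_mem h4
      rcases lt_trichotomy p3 (C.r p4) with hh | hh | hh
      · exact h2341 o12 o23 hh v12 v23 v41
      · exact h3 (hh ▸ hk'S)
      · have hlt : C.w p4 < C.w (C.r p4) := C.SdecI h3412 hk'S h4 (lt_trans hh o34)
        exact absurd (lt_trans hlt v41) (not_lt.mpr (le_of_lt h))
  · rw [C.q_eq h4] at v41
    exact h2341 o12 o23 o34 v12 v23 v41

/-- Case I: q avoids 2143. -/
lemma I_no2143q (h2143 : No2143 C.w) (h2341 : No2341 C.w) (h3412 : No3412 C.w) :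
    No2143 C.q := by
  intro p1 p2 p3 p4 o12 o23 o34 v21 v14 v43
  by_cases h3 : p3 ∈ C.S
  · have h4 : p4 ∈ C.S := C.mem_S_q.mpr ⟨lt_trans (C.S_gt h3) o34,
      lt_trans v43 (C.q_small h3)⟩
    exact absurd (C.qmonoI h3412 h3 h4 o34) (not_lt.mpr (le_of_lt v43))
  by_cases h1 : p1 ∈ C.S
  · have h2 : p2 ∈ C.S := C.mem_S_q.mpr ⟨lt_trans (C.S_gt h1) o12,
      lt_trans v21 (C.q_small h1)⟩
    exact absurd (C.qmonoI h3412 h1 h2 o12) (not_lt.mpr (le_of_lt v21))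
  rw [C.q_eq h1] at v21 v14
  rw [C.q_eq h3] at v43
  by_cases h2 : p2 ∈ C.S
  · by_cases h4 : p4 ∈ C.S
    · -- (iv) p2,p4 ∈ S
      have hp3J : C.J < p3 := lt_trans (C.S_gt h2) o23
      have hu3 : C.A < C.w p3 := C.big_of_not_S hp3J h3
      have hw1A : C.w p1 < C.A := lt_trans v14 (C.q_small h4)
      have hp1J : p1 < C.J := C.lt_J_of_small hw1A h1
      rcases lt_or_gt_of_ne (C.ne_I_of_lt hw1A) with hlt | hgt
      · exact absurd (C.F5 h2341 hlt hw1A (C.r_mem h2)) (not_lt.mpr (le_of_lt v21))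
      · have hB3 : C.B < C.w p3 := C.H2 h2143 hgt hw1A hp1J hp3J C.AB hu3
        rcases lt_trichotomy p3 (C.r p2) with hh | hh | hh
        · exact h2341 hp1J hp3J hh (lt_trans hw1A C.AB) hB3 v21
        · exact h3 (hh ▸ (C.r_mem h2))
        · have hlt2 : C.w p4 < C.w (C.r p2) :=
            C.SdecI h3412 (C.r_mem h2) h4 (lt_trans hh o34)
          exact h2341 hp1J hp3J o34 (lt_trans hw1A C.AB) hB3
            (lt_trans hlt2 v21)
    · -- (iii) p2 ∈ S, p4 ∉ S
      rw [C.q_eq h4] at v14 v43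
      have hp3J : C.J < p3 := lt_trans (C.S_gt h2) o23
      have hu4 : C.A < C.w p4 := C.big_of_not_S (lt_trans hp3J o34) h4
      have hne : p2 ≠ p1 := ne_of_gt o12
      rcases lt_or_gt_of_ne (C.wne hne) with h | h
      · exact h2143 o12 o23 o34 h v14 v43
      · have hw1A : C.w p1 < C.A := lt_trans h (C.S_small h2)
        rcases lt_or_gt_of_ne (C.ne_I_of_lt hw1A) with hlt | hgt
        · exact absurd (C.F5 h2341 hlt hw1A (C.r_mem h2))
            (not_lt.mpr (le_of_lt v21))
        · exact h2143 hgt (lt_trans o12 o23) o34 hw1A hu4 v43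
  · by_cases h4 : p4 ∈ C.S
    · -- (ii) p2 ∉ S, p4 ∈ S
      rw [C.q_eq h2] at v21
      rcases lt_trichotomy p3 (C.r p4) with hh | hh | hh
      · exact h2143 o12 o23 hh v21 v14 v43
      · exact h3 (hh ▸ (C.r_mem h4))
      · have hp3J : C.J < p3 := lt_trans (C.S_gt (C.r_mem h4)) hh
        have hu3 : C.A < C.w p3 := C.big_of_not_S hp3J h3
        have hne : p1 ≠ p4 := ne_of_lt (lt_trans o12 (lt_trans o23 o34))
        rcases lt_or_gt_of_ne (C.wne hne) with h | h
        · exact h2143 o12 o23 o34 v21 h (lt_trans (C.S_small h4) hu3)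
        · have hw1A : C.w p1 < C.A := lt_trans v14 (C.q_small h4)
          have hp1J : p1 < C.J := C.lt_J_of_small hw1A h1
          rcases lt_or_gt_of_ne (C.ne_I_of_lt hw1A) with hlt | hgt
          · exact absurd (C.F5 h2341 hlt hw1A h4) (not_lt.mpr (le_of_lt h))
          · have hB3 : C.B < C.w p3 := C.H2 h2143 hgt hw1A hp1J hp3J C.AB hu3
            exact h2341 hp1J hp3J o34 (lt_trans hw1A C.AB) hB3 h
    · -- (i) none
      rw [C.q_eq h2] at v21
      rw [C.q_eq h4] at v14 v43
      exact h2143 o12 o23 o34 v21 v14 v43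

/-- Case I: q avoids 3421. -/
lemma I_no3421q (h2143 : No2143 C.w) (h2341 : No2341 C.w) (h3412 : No3412 C.w)
    (hq2143 : No2143 C.q) (hq2341 : No2341 C.q) : No3421 C.q := by
  intro p1 p2 p3 p4 o12 o23 o34 v43 v31 v12
  rcases lt_trichotomy p1 C.I with hp1 | hp1 | hp1
  · exact C.q_min1 hp1 ⟨o12, v12, p3, p4, o23, lt_trans o23 o34, ne_of_lt o34,
      v31, lt_trans v43 v31⟩
  · subst hp1
    rw [C.qI] at v31 v12
    have h3 : p3 ∉ C.S := by
      intro h3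
      by_cases h4 : p4 ∈ C.S
      · exact absurd (C.qmonoI h3412 h3 h4 o34) (not_lt.mpr (le_of_lt v43))
      · exact absurd (C.q_big (lt_trans (C.S_gt h3) o34) h4)
          (not_lt.mpr (le_of_lt (lt_trans v43 v31)))
    have hp3J : p3 < C.J := C.q_lt_J_of_small v31 h3
    have h2 : p2 ∉ C.S := fun hm =>
      absurd (lt_trans (lt_trans (C.S_gt hm) o23) hp3J) (lt_irrefl _)
    obtain ⟨s, -, hs, -, -⟩ := C.Spair
    rw [C.q_eq h2] at v12
    rw [C.q_eq h3] at v31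
    exact absurd (C.minJ ⟨o12, v12, p3, s, o23,
        lt_trans (lt_trans o23 hp3J) (C.S_gt hs),
        ne_of_lt (lt_trans hp3J (C.S_gt hs)), v31, C.S_small hs⟩)
      (not_le.mpr (lt_trans o23 hp3J))
  · have h1 : p1 ∉ C.S := by
      intro h1
      by_cases h3 : p3 ∈ C.S
      · by_cases h4 : p4 ∈ C.S
        · exact absurd (C.qmonoI h3412 h3 h4 o34) (not_lt.mpr (le_of_lt v43))
        · exact absurd (C.q_big (lt_trans (C.S_gt h3) o34) h4)
            (not_lt.mpr (le_of_lt (lt_trans v43 (C.q_small h3))))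
      · exact absurd (C.q_big (lt_trans (C.S_gt h1) (lt_trans o12 o23)) h3)
          (not_lt.mpr (le_of_lt (lt_trans v31 (C.q_small h1))))
    have h2 : p2 ∉ C.S := by
      intro h2
      by_cases h3 : p3 ∈ C.S
      · by_cases h4 : p4 ∈ C.S
        · exact absurd (C.qmonoI h3412 h3 h4 o34) (not_lt.mpr (le_of_lt v43))
        · exact absurd (C.q_big (lt_trans (C.S_gt h3) o34) h4)
            (not_lt.mpr (le_of_lt (lt_trans v43 (C.q_small h3))))
      · exact absurd (C.q_big (lt_trans (C.S_gt h2) o23) h3)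
          (not_lt.mpr (le_of_lt (lt_trans v31 (lt_trans v12 (C.q_small h2)))))
    have h3 : p3 ∉ C.S := by
      intro h3
      by_cases h4 : p4 ∈ C.S
      · exact absurd (C.qmonoI h3412 h3 h4 o34) (not_lt.mpr (le_of_lt v43))
      · exact absurd (C.q_big (lt_trans (C.S_gt h3) o34) h4)
          (not_lt.mpr (le_of_lt (lt_trans v43 (C.q_small h3))))
    by_cases h4 : p4 ∈ C.S
    · rcases lt_or_gt_of_ne (C.wne (ne_of_gt hp1)) with hsm | hbg
      · -- w p1 < A
        have hq3 : C.q p3 < C.A := lt_trans v31 (by rw [C.q_eq h1]; exact hsm)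
        have hp3J : p3 < C.J := C.q_lt_J_of_small hq3 h3
        have hp2J : p2 < C.J := lt_trans o23 hp3J
        rw [C.q_eq h1] at v31 v12
        rw [C.q_eq h2] at v12
        have hw2B : C.w p2 < C.B := by
          rcases lt_or_gt_of_ne (C.wne (ne_of_gt (lt_trans hp1 o12) : p2 ≠ C.I)) with h | h
          · exact lt_trans h C.AB
          · exact C.H2 h2143 hp1 hsm o12 hp2J h C.AB
        exact h2341 o12 hp2J (C.S_gt (C.r_mem h4)) v12 hw2B (lt_trans v43 v31)
      · -- A < w p1
        exact hq2341 hp1 o12 (lt_trans o23 o34)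
          (by rw [C.qI, C.q_eq h1]; exact hbg) v12
          (by rw [C.qI]; exact C.q_small h4)
    · exact C.Q.claim3421 hq2143 hq2341 o12 o23 o34
        (by rw [C.QS]; exact h2) (by rw [C.QS]; exact h3) (by rw [C.QS]; exact h4)
        v43 v31 v12

/-- Case II: q avoids 2341. -/
lemma II_no2341q (h2143 : No2143 C.w) (h2341 : No2341 C.w) (h3421 : No3421 C.w) :
    No2341 C.q := by
  intro p1 p2 p3 p4 o12 o23 o34 v12 v23 v41
  by_cases h3 : p3 ∈ C.S
  · have hq3 : C.q p3 < C.A := C.q_small h3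
    have h4 : p4 ∈ C.S := C.mem_S_q.mpr ⟨lt_trans (C.S_gt h3) o34,
      lt_trans v41 (lt_trans (lt_trans v12 v23) hq3)⟩
    have h1 : p1 ∉ C.S := fun h1 =>
      absurd (C.qantiII h3421 h1 h3 (lt_trans o12 o23))
        (not_lt.mpr (le_of_lt (lt_trans v12 v23)))
    have h2 : p2 ∉ C.S := fun h2 =>
      absurd (C.qantiII h3421 h2 h3 o23) (not_lt.mpr (le_of_lt v23))
    rw [C.q_eq h1] at v12 v41
    rw [C.q_eq h2] at v12 v23
    have hw2A : C.w p2 < C.A := lt_trans v23 hq3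
    have hw1A : C.w p1 < C.A := lt_trans v12 hw2A
    have hp2J : p2 < C.J := C.lt_J_of_small hw2A h2
    rcases lt_or_gt_of_ne (C.ne_I_of_lt hw1A) with hlt | hgt
    · exact absurd (C.F5 h2341 hlt hw1A (C.r_mem h4)) (not_lt.mpr (le_of_lt v41))
    · exact h2341 o12 hp2J (C.S_gt (C.r_mem h4)) v12 (lt_trans hw2A C.AB) v41
  by_cases h2 : p2 ∈ C.S
  · have hq2 : C.q p2 < C.A := C.q_small h2
    have h4 : p4 ∈ C.S := C.mem_S_q.mpr
      ⟨lt_trans (C.S_gt h2) (lt_trans o23 o34), lt_trans v41 (lt_trans v12 hq2)⟩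
    have hu3 : C.A < C.q p3 := C.q_big (lt_trans (C.S_gt h2) o23) h3
    have h1 : p1 ∉ C.S := fun h1 =>
      absurd (C.qantiII h3421 h1 h2 o12) (not_lt.mpr (le_of_lt v12))
    rw [C.q_eq h1] at v12 v41
    have hw1A : C.w p1 < C.A := lt_trans v12 hq2
    have hp1J : p1 < C.J := C.lt_J_of_small hw1A h1
    rcases lt_or_gt_of_ne (C.ne_I_of_lt hw1A) with hlt | hgt
    · exact absurd (C.F5 h2341 hlt hw1A (C.r_mem h4)) (not_lt.mpr (le_of_lt v41))
    · have hp3J : C.J < p3 := lt_trans (C.S_gt h2) o23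
      have hw3 : C.A < C.w p3 := by rw [← C.q_eq h3]; exact hu3
      have hB3 : C.B < C.w p3 := C.H2 h2143 hgt hw1A hp1J hp3J C.AB hw3
      rcases lt_trichotomy p3 (C.r p4) with hh | hh | hh
      · exact h2341 hp1J hp3J hh (lt_trans hw1A C.AB) hB3 v41
      · exact h3 (hh ▸ (C.r_mem h4))
      · rcases lt_or_gt_of_ne
            (C.wne (ne_of_lt (lt_trans o12 (lt_trans o23 o34)) : p1 ≠ p4)) with h | h
        · exact h2143 (lt_trans hp1J (C.S_gt (C.r_mem h4))) hh o34 v41 h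
            (lt_trans (C.S_small h4) hw3)
        · exact h2341 hp1J hp3J o34 (lt_trans hw1A C.AB) hB3 h
  by_cases h1 : p1 ∈ C.S
  · have hu2 : C.A < C.q p2 := C.q_big (lt_trans (C.S_gt h1) o12) h2
    have h4 : p4 ∈ C.S := C.mem_S_q.mpr
      ⟨lt_trans (C.S_gt h1) (lt_trans o12 (lt_trans o23 o34)),
       lt_trans v41 (C.q_small h1)⟩
    rw [C.q_eq h2] at hu2 v23
    rw [C.q_eq h3] at v23
    exact h2341 (lt_trans (C.I_gt_S h1) o12) o23 o34 hu2 v23 (C.S_small h4)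
  by_cases h4 : p4 ∈ C.S
  · rw [C.q_eq h1] at v12 v41
    rw [C.q_eq h2] at v12 v23
    rw [C.q_eq h3] at v23
    rcases lt_or_gt_of_ne
        (C.wne (ne_of_gt (lt_trans o12 (lt_trans o23 o34)) : p4 ≠ p1)) with h | h
    · exact h2341 o12 o23 o34 v12 v23 h
    · have hw1A : C.w p1 < C.A := lt_trans h (C.S_small h4)
      rcases lt_trichotomy p3 (C.r p4) with hh | hh | hh
      · exact h2341 o12 o23 hh v12 v23 v41
      · exact h3 (hh ▸ (C.r_mem h4))
      · have hp3J : C.J < p3 := lt_trans (C.S_gt (C.r_mem h4)) hh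
        have hu3 : C.A < C.w p3 := C.big_of_not_S hp3J h3
        have hp1J : p1 < C.J := C.lt_J_of_small hw1A h1
        rcases lt_or_gt_of_ne (C.ne_I_of_lt hw1A) with hlt | hgt
        · exact absurd (C.F5 h2341 hlt hw1A (C.r_mem h4))
            (not_lt.mpr (le_of_lt v41))
        · exact h2143 (lt_trans hp1J (C.S_gt (C.r_mem h4))) hh o34 v41 h
            (lt_trans (C.S_small h4) hu3)
  · rw [C.q_eq h1] at v12 v41
    rw [C.q_eq h2] at v12 v23
    rw [C.q_eq h3] at v23
    rw [C.q_eq h4] at v41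
    exact h2341 o12 o23 o34 v12 v23 v41

end Ctx
end Bij7

namespace Bij7
namespace Ctx
variable {n : ℕ} (C : Ctx n)

/-- Case II: q avoids 2143. -/
lemma II_no2143q (h2143 : No2143 C.w) (h2341 : No2341 C.w) (h3421 : No3421 C.w) :
    No2143 C.q := by
  intro p1 p2 p3 p4 o12 o23 o34 v21 v14 v43
  by_cases h3 : p3 ∈ C.S
  · have hq3 : C.q p3 < C.A := C.q_small h3
    have h1 : p1 ∉ C.S := fun h1 =>
      absurd (C.qantiII h3421 h1 h3 (lt_trans o12 o23))
        (not_lt.mpr (le_of_lt (lt_trans v14 v43)))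
    have h2 : p2 ∉ C.S := fun h2 =>
      absurd (C.qantiII h3421 h2 h3 o23)
        (not_lt.mpr (le_of_lt (lt_trans v21 (lt_trans v14 v43))))
    rw [C.q_eq h1] at v21 v14
    rw [C.q_eq h2] at v21
    have hw1A : C.w p1 < C.A := lt_trans v14 (lt_trans v43 hq3)
    have hw2A : C.w p2 < C.A := lt_trans v21 hw1A
    have hp2J : p2 < C.J := C.lt_J_of_small hw2A h2
    exact h2143 o12 hp2J (C.S_gt (C.r_mem h3)) v21 (lt_trans v14 v43)
      (lt_trans hq3 C.AB)
  by_cases h4 : p4 ∈ C.S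
  · have hq4 : C.q p4 < C.A := C.q_small h4
    have h1 : p1 ∉ C.S := fun h1 =>
      absurd (C.qantiII h3421 h1 h4 (lt_trans o12 (lt_trans o23 o34)))
        (not_lt.mpr (le_of_lt v14))
    have h2 : p2 ∉ C.S := fun h2 =>
      absurd (C.qantiII h3421 h2 h4 (lt_trans o23 o34))
        (not_lt.mpr (le_of_lt (lt_trans v21 v14)))
    rw [C.q_eq h1] at v21 v14
    rw [C.q_eq h2] at v21
    have hw1A : C.w p1 < C.A := lt_trans v14 hq4
    have hw2A : C.w p2 < C.A := lt_trans v21 hw1A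
    have hp2J : p2 < C.J := C.lt_J_of_small hw2A h2
    exact h2143 o12 hp2J (C.S_gt (C.r_mem h4)) v21 v14 (lt_trans hq4 C.AB)
  by_cases h1 : p1 ∈ C.S
  · have hu4 : C.A < C.q p4 :=
      C.q_big (lt_trans (C.S_gt h1) (lt_trans o12 (lt_trans o23 o34))) h4
    rw [C.q_eq h3] at v43
    rw [C.q_eq h4] at v43 hu4
    exact h2143 (C.I_gt_S h1) (lt_trans o12 o23) o34 (C.S_small h1) hu4 v43
  by_cases h2 : p2 ∈ C.S
  · have hu4 : C.A < C.q p4 :=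
      C.q_big (lt_trans (C.S_gt h2) (lt_trans o23 o34)) h4
    rw [C.q_eq h3] at v43
    rw [C.q_eq h4] at v43 hu4
    exact h2143 (C.I_gt_S h2) o23 o34 (C.S_small h2) hu4 v43
  · rw [C.q_eq h1] at v21 v14
    rw [C.q_eq h2] at v21
    rw [C.q_eq h3] at v43
    rw [C.q_eq h4] at v43 v14
    exact h2143 o12 o23 o34 v21 v14 v43

/-- Case II: q avoids 3412. -/
lemma II_no3412q (h2143 : No2143 C.w) (h2341 : No2341 C.w) (h3421 : No3421 C.w)
    (hq2143 : No2143 C.q) (hq2341 : No2341 C.q) : No3412 C.q := by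
  intro p1 p2 p3 p4 o12 o23 o34 v34 v41 v12
  rcases lt_trichotomy p1 C.I with hp1 | hp1 | hp1
  · exact C.q_min1 hp1 ⟨o12, v12, p3, p4, o23, lt_trans o23 o34, ne_of_lt o34,
      lt_trans v34 v41, v41⟩
  · subst hp1
    rw [C.qI] at v41 v12
    have h3 : p3 ∉ C.S := by
      intro h3
      by_cases h4 : p4 ∈ C.S
      · exact absurd (C.qantiII h3421 h3 h4 o34) (not_lt.mpr (le_of_lt v34))
      · exact absurd (C.q_big (lt_trans (C.S_gt h3) o34) h4)
          (not_lt.mpr (le_of_lt v41))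
    have hq3A : C.q p3 < C.A := lt_trans v34 v41
    have hp3J : p3 < C.J := C.q_lt_J_of_small hq3A h3
    have h2 : p2 ∉ C.S := fun hm =>
      absurd (lt_trans (lt_trans (C.S_gt hm) o23) hp3J) (lt_irrefl _)
    obtain ⟨s, -, hs, -, -⟩ := C.Spair
    rw [C.q_eq h2] at v12
    rw [C.q_eq h3] at hq3A
    exact absurd (C.minJ ⟨o12, v12, p3, s, o23,
        lt_trans (lt_trans o23 hp3J) (C.S_gt hs),
        ne_of_lt (lt_trans hp3J (C.S_gt hs)), hq3A, C.S_small hs⟩)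
      (not_le.mpr (lt_trans o23 hp3J))
  · have h1 : p1 ∉ C.S := by
      intro h1
      by_cases h3 : p3 ∈ C.S
      · by_cases h4 : p4 ∈ C.S
        · exact absurd (C.qantiII h3421 h3 h4 o34) (not_lt.mpr (le_of_lt v34))
        · exact absurd (C.q_big (lt_trans (C.S_gt h3) o34) h4)
            (not_lt.mpr (le_of_lt (lt_trans v41 (C.q_small h1))))
      · exact absurd (C.q_big (lt_trans (C.S_gt h1) (lt_trans o12 o23)) h3)
          (not_lt.mpr (le_of_lt (lt_trans (lt_trans v34 v41) (C.q_small h1))))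
    have h2 : p2 ∉ C.S := by
      intro h2
      by_cases h3 : p3 ∈ C.S
      · by_cases h4 : p4 ∈ C.S
        · exact absurd (C.qantiII h3421 h3 h4 o34) (not_lt.mpr (le_of_lt v34))
        · exact absurd (C.q_big (lt_trans (C.S_gt h3) o34) h4)
            (not_lt.mpr (le_of_lt (lt_trans v41 (lt_trans v12 (C.q_small h2)))))
      · exact absurd (C.q_big (lt_trans (C.S_gt h2) o23) h3)
          (not_lt.mpr (le_of_lt (lt_trans (lt_trans v34 v41)
            (lt_trans v12 (C.q_small h2)))))
    by_cases h3 : p3 ∈ C.S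
    · have h4 : p4 ∉ C.S := fun h4 =>
        absurd (C.qantiII h3421 h3 h4 o34) (not_lt.mpr (le_of_lt v34))
      have hu4 : C.A < C.q p4 := C.q_big (lt_trans (C.S_gt h3) o34) h4
      have hu1 : C.A < C.w p1 := by rw [← C.q_eq h1]; exact lt_trans hu4 v41
      rw [C.q_eq h1, C.q_eq h2] at v12
      exact h2341 hp1 o12 o23 hu1 v12 (C.S_small h3)
    by_cases h4 : p4 ∈ C.S
    · have hq4A : C.q p4 < C.A := C.q_small h4
      have hq3A : C.q p3 < C.A := lt_trans v34 hq4A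
      have hp3J : p3 < C.J := C.q_lt_J_of_small hq3A h3
      rw [C.q_eq h1] at v41 v12
      rw [C.q_eq h2] at v12
      rcases lt_or_gt_of_ne (C.wne (ne_of_gt hp1)) with hsm | hbg
      · have hp2J : p2 < C.J := lt_trans o23 hp3J
        have hw2B : C.w p2 < C.B := by
          rcases lt_or_gt_of_ne (C.wne (ne_of_gt (lt_trans hp1 o12) : p2 ≠ C.I)) with h | h
          · exact lt_trans h C.AB
          · exact C.H2 h2143 hp1 hsm o12 hp2J h C.AB
        exact h2341 o12 hp2J (C.S_gt (C.r_mem h4)) v12 hw2B v41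
      · rw [C.q_eq h3] at hq3A
        exact h2341 hp1 o12 o23 hbg v12 hq3A
    · exact C.Q.claim3412 hq2143 hq2341 o12 o23 o34
        (by rw [C.QS]; exact h2) (by rw [C.QS]; exact h3) (by rw [C.QS]; exact h4)
        v34 v41 v12

end Ctx
end Bij7

namespace Bij7
variable {n : ℕ}

/-- The bijection on permutations. -/
noncomputable def FP (π : Equiv.Perm (Fin n)) : Equiv.Perm (Fin n) :=
  if h : Dne ⇑π then
    (Function.Involutive.toPerm _ (revIn_invol (Sset ⇑π h))).trans π
  else π

/-- The context associated to a permutation with a D-pair. -/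
def ctx (π : Equiv.Perm (Fin n)) (h : Dne ⇑π) : Ctx n := ⟨⇑π, π.injective, h⟩

lemma FP_eq_q (π : Equiv.Perm (Fin n)) (h : Dne ⇑π) : ⇑(FP π) = (ctx π h).q := by
  funext x
  rw [FP, dif_pos h]
  rfl

lemma FP_eq_self (π : Equiv.Perm (Fin n)) (h : ¬ Dne ⇑π) : FP π = π := dif_neg h

lemma FP_invol (π : Equiv.Perm (Fin n)) : FP (FP π) = π := by
  by_cases h : Dne ⇑π
  · have hq : ⇑(FP π) = (ctx π h).q := FP_eq_q π h
    have h2 : Dne ⇑(FP π) := by rw [hq]; exact (ctx π h).hneq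
    apply Equiv.ext
    intro x
    have e1 : (FP (FP π)) x = (FP π) (revIn (Sset ⇑(FP π) h2) x) := by
      rw [FP, dif_pos h2]; rfl
    have e2 : Sset ⇑(FP π) h2 = (ctx π h).S := by
      have e3 : Sset ⇑(FP π) h2 = (ctx π h).Q.S := by
        congr 1
      rw [e3, (ctx π h).QS]
    rw [e1, e2, hq]
    show (ctx π h).q ((ctx π h).r x) = π x
    rw [show (ctx π h).q ((ctx π h).r x) = (ctx π h).w ((ctx π h).r ((ctx π h).r x)) from rfl,
      (ctx π h).r_invol]
    rfl
  · rw [FP_eq_self π h, FP_eq_self π h]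

lemma FP_lr (π : Equiv.Perm (Fin n)) (i : Fin n) :
    isLRMax (⇑(FP π)) i ↔ isLRMax (⇑π) i := by
  by_cases h : Dne ⇑π
  · rw [FP_eq_q π h]
    exact (ctx π h).lr_iff i
  · rw [FP_eq_self π h]

/-- A → B : if π avoids 2143, 2341, 3412 then FP π avoids 2143, 2341, 3421. -/
lemma FP_mem_B (π : Equiv.Perm (Fin n))
    (ha : avoidsPat (⇑π) ![1,0,3,2] ∧ avoidsPat (⇑π) ![1,2,3,0] ∧
      avoidsPat (⇑π) ![2,3,0,1]) :
    avoidsPat (⇑(FP π)) ![1,0,3,2] ∧ avoidsPat (⇑(FP π)) ![1,2,3,0] ∧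
      avoidsPat (⇑(FP π)) ![2,3,1,0] := by
  obtain ⟨ha1, ha2, ha3⟩ := ha
  by_cases h : Dne ⇑π
  · set C := ctx π h with hC
    have h2143 : No2143 C.w := no2143_iff.mp ha1
    have h2341 : No2341 C.w := no2341_iff.mp ha2
    have h3412 : No3412 C.w := no3412_iff.mp ha3
    have hq2143 := C.I_no2143q h2143 h2341 h3412
    have hq2341 := C.I_no2341q h2143 h2341 h3412
    have hq3421 := C.I_no3421q h2143 h2341 h3412 hq2143 hq2341
    rw [FP_eq_q π h]
    exact ⟨no2143_iff.mpr hq2143, no2341_iff.mpr hq2341, no3421_iff.mpr hq3421⟩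
  · rw [FP_eq_self π h]
    exact ⟨ha1, ha2, no3421_iff.mpr (no3421_of_not_Dne h)⟩

/-- B → A : if π avoids 2143, 2341, 3421 then FP π avoids 2143, 2341, 3412. -/
lemma FP_mem_A (π : Equiv.Perm (Fin n))
    (ha : avoidsPat (⇑π) ![1,0,3,2] ∧ avoidsPat (⇑π) ![1,2,3,0] ∧
      avoidsPat (⇑π) ![2,3,1,0]) :
    avoidsPat (⇑(FP π)) ![1,0,3,2] ∧ avoidsPat (⇑(FP π)) ![1,2,3,0] ∧
      avoidsPat (⇑(FP π)) ![2,3,0,1] := by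
  obtain ⟨ha1, ha2, ha3⟩ := ha
  by_cases h : Dne ⇑π
  · set C := ctx π h with hC
    have h2143 : No2143 C.w := no2143_iff.mp ha1
    have h2341 : No2341 C.w := no2341_iff.mp ha2
    have h3421 : No3421 C.w := no3421_iff.mp ha3
    have hq2143 := C.II_no2143q h2143 h2341 h3421
    have hq2341 := C.II_no2341q h2143 h2341 h3421
    have hq3412 := C.II_no3412q h2143 h2341 h3421 hq2143 hq2341
    rw [FP_eq_q π h]
    exact ⟨no2143_iff.mpr hq2143, no2341_iff.mpr hq2341, no3412_iff.mpr hq3412⟩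
  · rw [FP_eq_self π h]
    exact ⟨ha1, ha2, no3412_iff.mpr (no3412_of_not_Dne h)⟩

end Bij7


/-- There is a bijection between {2143,2341,3412}-avoiders and {2143,2341,3421}-avoiders
of [n] that preserves the positions (hence also the number) of left-right maxima. -/
theorem stmt7 (n : ℕ) :
    ∃ e : {π : Equiv.Perm (Fin n) //
            avoidsPat (⇑π) ![1,0,3,2] ∧ avoidsPat (⇑π) ![1,2,3,0] ∧
              avoidsPat (⇑π) ![2,3,0,1]} ≃
          {π : Equiv.Perm (Fin n) //
            avoidsPat (⇑π) ![1,0,3,2] ∧ avoidsPat (⇑π) ![1,2,3,0] ∧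
              avoidsPat (⇑π) ![2,3,1,0]},
      ∀ π, ∀ i : Fin n, isLRMax (⇑(e π).1) i ↔ isLRMax (⇑π.1) i := by
  refine ⟨⟨fun p => ⟨Bij7.FP p.1, Bij7.FP_mem_B p.1 p.2⟩,
           fun p => ⟨Bij7.FP p.1, Bij7.FP_mem_A p.1 p.2⟩, ?_, ?_⟩, ?_⟩
  · intro p; exact Subtype.ext (Bij7.FP_invol p.1)
  · intro p; exact Subtype.ext (Bij7.FP_invol p.1)
  · intro p i; exact Bij7.FP_lr p.1 i
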